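/- Let r ∈ (1, 5/2) and define a_{k₁,k₂} := k₁^{−r} if k₁ = k₂ ≥ 1 and a_{k₁,k₂} := 0 otherwise. If r > s + 1 for some s ≥ 1, then ∑_{i=0}^∞ (i+1)^s (∑_{‖(j₁,j₂)‖_∞ = i} a_{j₁,j₂}²)^{1/2} < ∞, while ∑_{k₁,k₂∈Z} (|k₁|+1)² (|k₂|+1)² a_{k₁,k₂}² = ∞ when r < 5/2. -/

import Mathlib

open Finset

/-- The diagonal coefficients `a_{k,k} = k^{-r}` (k ≥ 1): the weighted block
summability condition holds when `r > s + 1`, while the polynomial-weight ℓ²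
condition of Mielkaitis–Paulauskas fails when `r < 5/2`. -/
theorem linear_field_counterexample (r s : ℝ) (hr1 : 1 < r) (hr2 : r < 5 / 2)
    (hs : 1 ≤ s) (hrs : s + 1 < r)
    (a : ℤ × ℤ → ℝ)
    (ha : ∀ k : ℤ × ℤ, a k = if 1 ≤ k.1 ∧ k.1 = k.2 then (k.1 : ℝ) ^ (-r) else 0) :
    Summable (fun i : ℕ =>
      ((i : ℝ) + 1) ^ s *
        (∑ j ∈ ((Finset.Icc (-(i : ℤ)) i) ×ˢ (Finset.Icc (-(i : ℤ)) i)).filter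
            (fun j => max |j.1| |j.2| = (i : ℤ)), (a j) ^ 2) ^ ((1 : ℝ) / 2))
    ∧ ¬ Summable (fun k : ℤ × ℤ =>
        ((|k.1| : ℝ) + 1) ^ 2 * ((|k.2| : ℝ) + 1) ^ 2 * (a k) ^ 2) := by
  constructor
  · -- first part
    have hblock : ∀ i : ℕ,
        (∑ j ∈ ((Finset.Icc (-(i : ℤ)) i) ×ˢ (Finset.Icc (-(i : ℤ)) i)).filter
            (fun j => max |j.1| |j.2| = (i : ℤ)), (a j) ^ 2)
          = ((i : ℝ) ^ (-r)) ^ 2 := by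
      intro i
      have hne : -r ≠ 0 := neg_ne_zero.mpr (by linarith)
      rw [Finset.sum_eq_single_of_mem ((i : ℤ), (i : ℤ))]
      · rw [ha]
        rcases Nat.eq_zero_or_pos i with h0 | h1
        · subst h0
          norm_num [Real.zero_rpow hne]
        · rw [if_pos ⟨by simpa using (by exact_mod_cast h1 : (1:ℤ) ≤ (i:ℤ)), rfl⟩]
          norm_num
      · simp [Finset.mem_filter, Finset.mem_product, abs_of_nonneg (by positivity : (0:ℤ) ≤ (i:ℤ))]
      · intro j hj hne
        rw [ha]
        rw [Finset.mem_filter] at hj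
        by_cases h : 1 ≤ j.1 ∧ j.1 = j.2
        · exfalso
          apply hne
          have h1 : |j.1| = j.1 := abs_of_nonneg (by omega)
          have h2 : j.2 = j.1 := h.2.symm
          have : j.1 = (i : ℤ) := by
            have := hj.2
            rw [h2, h1, max_self] at this
            exact this
          exact Prod.ext this (by rw [h2, this])
        · simp [h]
    have heq : (fun i : ℕ =>
        ((i : ℝ) + 1) ^ s *
          (∑ j ∈ ((Finset.Icc (-(i : ℤ)) i) ×ˢ (Finset.Icc (-(i : ℤ)) i)).filter
              (fun j => max |j.1| |j.2| = (i : ℤ)), (a j) ^ 2) ^ ((1 : ℝ) / 2))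
        = fun i : ℕ => ((i : ℝ) + 1) ^ s * (i : ℝ) ^ (-r) := by
      funext i
      rw [hblock i]
      congr 1
      have hx : (0:ℝ) ≤ (i : ℝ) ^ (-r) := Real.rpow_nonneg (Nat.cast_nonneg i) _
      rw [← Real.rpow_natCast ((i : ℝ) ^ (-r)) 2, ← Real.rpow_mul hx]
      norm_num
    rw [heq]
    refine Summable.of_nonneg_of_le (fun i => ?_) (fun i => ?_)
      ((Real.summable_nat_rpow.mpr (by linarith : s - r < -1)).mul_left (2 ^ s))
    · positivity
    · rcases Nat.eq_zero_or_pos i with h0 | h1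
      · subst h0
        have hne : -r ≠ 0 := neg_ne_zero.mpr (by linarith)
        have hne2 : s - r ≠ 0 := by intro hc; nlinarith
        simp [Real.zero_rpow hne, Real.zero_rpow hne2]
      · have hi1 : (1:ℝ) ≤ (i:ℝ) := by exact_mod_cast h1
        have hipos : (0:ℝ) < (i:ℝ) := by linarith
        have h1' : ((i:ℝ) + 1) ^ s ≤ 2 ^ s * (i:ℝ) ^ s := by
          rw [← Real.mul_rpow (by norm_num) (le_of_lt hipos)]
          apply Real.rpow_le_rpow (by linarith) (by linarith) (by linarith)
        calc ((i:ℝ) + 1) ^ s * (i:ℝ) ^ (-r)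
            ≤ 2 ^ s * (i:ℝ) ^ s * (i:ℝ) ^ (-r) := by
              apply mul_le_mul_of_nonneg_right h1' (Real.rpow_nonneg (le_of_lt hipos) _)
          _ = 2 ^ s * (i:ℝ) ^ (s - r) := by
              rw [mul_assoc, ← Real.rpow_add hipos]; ring_nf
  · -- second part
    intro h
    have hι : Function.Injective (fun n : ℕ => (((n:ℤ)+1, (n:ℤ)+1) : ℤ × ℤ)) := by
      intro a b hab
      simpa using hab
    have h2 := h.comp_injective hι
    have hg : Summable (fun n : ℕ => ((n:ℝ)+1) ^ (4 - 2*r)) := by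
      apply Summable.of_nonneg_of_le _ _ h2
      · intro n; positivity
      · intro n
        simp only [Function.comp_apply]
        have hx : (0:ℝ) < (n:ℝ) + 1 := by positivity
        have hav : a ((n:ℤ)+1, (n:ℤ)+1) = ((n:ℝ)+1) ^ (-r) := by
          rw [ha, if_pos ⟨by omega, rfl⟩]
          push_cast; ring_nf
        have habs : |((((n:ℤ)+1) : ℤ) : ℝ)| = (n:ℝ)+1 := by
          push_cast; rw [abs_of_nonneg hx.le]
        rw [hav, habs]
        have hsq : (((n:ℝ)+1) ^ (-r)) ^ 2 = ((n:ℝ)+1) ^ (-(2*r)) := by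
          rw [← Real.rpow_natCast (((n:ℝ)+1) ^ (-r)) 2, ← Real.rpow_mul (le_of_lt hx)]
          congr 1; push_cast; ring
        have hsplit : ((n:ℝ)+1) ^ (4 - 2*r)
            = ((n:ℝ)+1) ^ (4:ℕ) * ((n:ℝ)+1) ^ (-(2*r)) := by
          rw [← Real.rpow_natCast ((n:ℝ)+1) 4, ← Real.rpow_add hx]
          congr 1
        rw [hsq, hsplit]
        push_cast
        have hy : (0:ℝ) ≤ ((n:ℝ)+1) ^ (-(2*r)) := Real.rpow_nonneg (le_of_lt hx) _
        have hpow : ((n:ℝ)+1) ^ (4:ℕ) ≤ ((n:ℝ)+1+1) ^ 2 * ((n:ℝ)+1+1) ^ 2 := by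
          nlinarith [hx.le]
        nlinarith [mul_le_mul_of_nonneg_right hpow hy]
    have hg' : Summable (fun n : ℕ => (n:ℝ) ^ (4 - 2*r)) := by
      rw [← summable_nat_add_iff 1]
      convert hg using 2 with n
      rfl
      push_cast; ring_nf
    have := Real.summable_nat_rpow.mp hg'
    linarith
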